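/- Let T be a tree in which every edge e is associated with a set V_e of vertices: V_e is the unique set of vertices intersecting every edge of T except e in exactly one vertex and disjoint from e; then V_e equals the set of vertices at odd distance from e. -/
import Mathlib


/-- The distance from a vertex `v` to an edge `e` (an unordered pair). -/
noncomputable def edgeDist {V : Type*} (G : SimpleGraph V) (v : V) (e : Sym2 V) : ℕ :=
  Sym2.lift ⟨fun x y => min (G.dist v x) (G.dist v y), fun x y => min_comm _ _⟩ e

open scoped Classical

section Helpers

open SimpleGraph Walk

variable {V : Type*} {G : SimpleGraph V}

/-- In a tree, every path has length equal to the distance between its ends. -/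
lemma tree_path_length (hT : G.IsTree) {u v : V} (p : G.Walk u v) (hp : p.IsPath) :
    p.length = G.dist u v := by
  obtain ⟨q, hq, hlen⟩ := hT.isConnected.exists_path_of_dist u v
  obtain ⟨r, _, hr⟩ := hT.existsUnique_path u v
  rw [hr p hp, hr q hq] at *
  exact hlen

/-- In a tree, a vertex on a path splits distances additively. -/
lemma tree_mem_support_dist (hT : G.IsTree) {u v x : V} (p : G.Walk u v) (hp : p.IsPath)
    (hx : x ∈ p.support) : G.dist u x + G.dist x v = G.dist u v := by
  classical
  have h1 := hp.takeUntil hx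
  have h2 := hp.dropUntil hx
  have := congrArg Walk.length (p.take_spec hx)
  rw [length_append] at this
  rw [← tree_path_length hT p hp, ← this, tree_path_length hT _ h1, tree_path_length hT _ h2]

/-- In a tree, distances to adjacent vertices differ by exactly one. -/
lemma tree_adj_dist (hT : G.IsTree) {a b : V} (hab : G.Adj a b) (w : V) :
    G.dist w a = G.dist w b + 1 ∨ G.dist w b = G.dist w a + 1 := by
  classical
  obtain ⟨p, hp, hlen⟩ := hT.isConnected.exists_path_of_dist w b
  by_cases ha : a ∈ p.support
  · right
    have := tree_mem_support_dist hT p hp ha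
    have hd : G.dist a b = 1 := SimpleGraph.dist_eq_one_iff_adj.mpr hab
    omega
  · left
    have hpath : (Walk.cons hab p.reverse).IsPath :=
      hp.reverse.cons (by simpa using ha)
    have := tree_path_length hT _ hpath
    simp only [Walk.length_cons, Walk.length_reverse] at this
    rw [hlen] at this
    have hc : G.dist a w = G.dist w a := SimpleGraph.dist_comm (u := a)
    omega

/-- The hard lemma: if distances to the endpoints of edge `ab` move oppositely across
edge `uv`, then `uv = ba`. -/
lemma tree_opposite (hT : G.IsTree) {a b u v : V} (hab : G.Adj a b) (huv : G.Adj u v)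
    (h1 : G.dist u a = G.dist v a + 1) (h2 : G.dist v b = G.dist u b + 1) :
    v = a ∧ u = b := by
  classical
  have hconn := hT.isConnected
  have hdab : G.dist a b = 1 := SimpleGraph.dist_eq_one_iff_adj.mpr hab
  have hdba : G.dist b a = 1 := by rwa [SimpleGraph.dist_comm]
  have hduv : G.dist u v = 1 := SimpleGraph.dist_eq_one_iff_adj.mpr huv
  have hdvu : G.dist v u = 1 := by rwa [SimpleGraph.dist_comm]
  have t1 : G.dist u a ≤ G.dist u b + 1 := by
    have := hconn.dist_triangle (u := u) (v := b) (w := a); omega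
  have t2 : G.dist v b ≤ G.dist v a + 1 := by
    have := hconn.dist_triangle (u := v) (v := a) (w := b); omega
  -- let m := dist v a = dist u b
  have hm : G.dist v a = G.dist u b := by omega
  set m := G.dist v a with hmdef
  -- R : path v → a of length m
  obtain ⟨R, hR, hRlen⟩ := hconn.exists_path_of_dist v a
  have hun : u ∉ R.support := fun h => by
    have := tree_mem_support_dist hT R hR h
    rw [hdvu] at this; omega
  have hbn : b ∉ R.support := fun h => by
    have := tree_mem_support_dist hT R hR h
    have : G.dist v b + G.dist b a = m := this
    omega
  -- W : path u → a through v
  have hW : (Walk.cons huv R).IsPath := hR.cons hun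
  -- Q : path b → u of length m
  obtain ⟨Q, hQ, hQlen⟩ := hconn.exists_path_of_dist b u
  have hQm : Q.length = m := by rw [hQlen, SimpleGraph.dist_comm]; omega
  have han : a ∉ Q.support := fun h => by
    have := tree_mem_support_dist hT Q hQ h
    rw [hdba] at this
    have hau : G.dist a u = G.dist u a := SimpleGraph.dist_comm ..
    omega
  -- Y : path a → u through b
  have hY : (Walk.cons hab Q).IsPath := hQ.cons han
  -- uniqueness : Y = W.reverse
  obtain ⟨r, _, hr⟩ := hT.existsUnique_path a u
  have heq : (Walk.cons hab Q) = (Walk.cons huv R).reverse :=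
    (hr _ hY).trans (hr _ hW.reverse).symm
  have hbW : b ∈ R.support ∨ b = v ∨ b = u := by
    have : b ∈ (Walk.cons huv R).reverse.support := by rw [← heq]; simp
    simpa using this
  have hbu : b = u := by
    rcases hbW with h | h | h
    · exact absurd h hbn
    · exfalso; rw [h, SimpleGraph.dist_self] at h2; omega
    · exact h
  have hm0 : m = 0 := by
    have : G.dist u b = 0 := by rw [← hbu, SimpleGraph.dist_self ]
    omega
  constructor
  · exact (hconn.dist_eq_zero_iff).mp (by omega)
  · exact ((hconn.dist_eq_zero_iff).mp (by rw [← hm]; omega : G.dist u b = 0))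

/-- Parity flip across an edge other than `ab`. -/
lemma tree_parity (hT : G.IsTree) {a b u v : V} (hab : G.Adj a b) (huv : G.Adj u v)
    (hne : s(u, v) ≠ s(a, b)) :
    Odd (min (G.dist u a) (G.dist u b)) ↔ ¬ Odd (min (G.dist v a) (G.dist v b)) := by
  have ca : G.dist a u = G.dist u a := SimpleGraph.dist_comm ..
  have ca' : G.dist a v = G.dist v a := SimpleGraph.dist_comm ..
  have cb : G.dist b u = G.dist u b := SimpleGraph.dist_comm ..
  have cb' : G.dist b v = G.dist v b := SimpleGraph.dist_comm ..
  have ha' := tree_adj_dist hT huv a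
  have hb' := tree_adj_dist hT huv b
  rw [ca, ca'] at ha'
  rw [cb, cb'] at hb'
  rcases ha' with h | h <;> rcases hb' with h' | h'
  · have hmin : min (G.dist u a) (G.dist u b) = min (G.dist v a) (G.dist v b) + 1 := by omega
    rw [hmin, Nat.odd_iff, Nat.odd_iff]
    omega
  · obtain ⟨hv, hu⟩ := tree_opposite hT hab huv h h'
    exact absurd (by rw [hu, hv]; exact Sym2.eq_swap) hne
  · obtain ⟨hu, hv⟩ := tree_opposite hT hab huv.symm h h'
    exact absurd (by rw [hu, hv]) hne
  · have hmin : min (G.dist v a) (G.dist v b) = min (G.dist u a) (G.dist u b) + 1 := by omega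
    rw [hmin, Nat.odd_iff, Nat.odd_iff]
    omega

/-- Step lemma: from a vertex at edge-distance `m+1`, there is a neighbour at
edge-distance `m` across an edge other than `ab`. -/
lemma tree_step (hT : G.IsTree) {a b : V} (hab : G.Adj a b) {v : V} {m : ℕ}
    (hva : G.dist v a = m + 1) (hle : G.dist v a ≤ G.dist v b) :
    ∃ u, G.Adj u v ∧ min (G.dist u a) (G.dist u b) = m ∧ s(u, v) ≠ s(a, b) := by
  obtain ⟨p, hp, hlen⟩ := hT.isConnected.exists_path_of_dist v a
  rw [hva] at hlen
  cases p with
  | nil => simp at hlen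
  | @cons _ w _ h q =>
    rw [Walk.length_cons] at hlen
    have hqa : G.dist w a ≤ m := by
      have := SimpleGraph.dist_le q
      omega
    have hvw : G.dist v w = 1 := SimpleGraph.dist_eq_one_iff_adj.mpr h
    have tva := hT.isConnected.dist_triangle (u := v) (v := w) (w := a)
    have tvb := hT.isConnected.dist_triangle (u := v) (v := w) (w := b)
    refine ⟨w, h.symm, by omega, ?_⟩
    intro hE
    rcases Sym2.eq_iff.mp hE with ⟨hwa, hvb⟩ | ⟨hwb, hva'⟩
    · have : G.dist v b = 0 := by rw [hvb]; exact SimpleGraph.dist_self ..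
      omega
    · have : G.dist v a = 0 := by rw [hva']; exact SimpleGraph.dist_self ..
      omega

lemma card_pair_inter {V : Type*} [DecidableEq V] {u v : V} (hne : u ≠ v) (S : Finset V) :
    (({u, v} : Finset V) ∩ S).card = 1 ↔ (u ∈ S ↔ v ∉ S) := by
  by_cases hu : u ∈ S <;> by_cases hv : v ∈ S <;>
    simp [Finset.insert_inter_of_mem, Finset.insert_inter_of_notMem,
      Finset.singleton_inter_of_mem, Finset.singleton_inter_of_notMem, hu, hv, hne]

end Helpers

/-- In a tree, for each edge e, a set S is disjoint from e and meets every other edge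
in exactly one vertex if and only if S is the set of vertices at odd distance from e. -/
theorem odd_distance_set_characterization {V : Type*} [Fintype V] [DecidableEq V]
    (G : SimpleGraph V) [DecidableRel G.Adj] (hT : G.IsTree)
    (e : Sym2 V) (he : e ∈ G.edgeFinset) (S : Finset V) :
    ((∀ v ∈ e, v ∉ S) ∧
      ∀ u v : V, G.Adj u v → s(u, v) ≠ e → (({u, v} : Finset V) ∩ S).card = 1) ↔
    S = Finset.univ.filter (fun v => Odd (edgeDist G v e)) := by
  induction e using Sym2.ind with
  | _ a b =>
  rw [SimpleGraph.mem_edgeFinset, SimpleGraph.mem_edgeSet] at he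
  have hED : ∀ v, edgeDist G v s(a, b) = min (G.dist v a) (G.dist v b) := fun v => rfl
  constructor
  · rintro ⟨h1, h2⟩
    have key : ∀ n : ℕ, ∀ v : V, min (G.dist v a) (G.dist v b) = n → (v ∈ S ↔ Odd n) := by
      intro n
      induction n using Nat.strong_induction_on with
      | _ n ih =>
        cases n with
        | zero =>
          intro v hv
          have hve : v = a ∨ v = b := by
            rcases Nat.min_eq_zero_iff.mp hv with h | h
            · exact Or.inl (hT.isConnected.dist_eq_zero_iff.mp h)
            · exact Or.inr (hT.isConnected.dist_eq_zero_iff.mp h)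
          have : v ∉ S := h1 v (by rw [Sym2.mem_iff]; exact hve)
          simp [this]
        | succ m =>
          intro v hv
          obtain ⟨u, huv, humin, hune⟩ :
              ∃ u, G.Adj u v ∧ min (G.dist u a) (G.dist u b) = m ∧ s(u, v) ≠ s(a, b) := by
            rcases le_total (G.dist v a) (G.dist v b) with h | h
            · exact tree_step hT he (by omega) h
            · obtain ⟨u, h1', h2', h3'⟩ := tree_step hT he.symm (v := v) (m := m) (by omega) h
              exact ⟨u, h1', by omega, fun hE => h3' (hE.trans Sym2.eq_swap)⟩
          have hcard := h2 u v huv hune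
          rw [card_pair_inter huv.ne S] at hcard
          have hu := ih m (Nat.lt_succ_self m) u humin
          have hvS : (v ∈ S) ↔ ¬ (u ∈ S) := by tauto
          rw [hvS, hu, Nat.odd_iff, Nat.odd_iff]
          omega
    ext v
    simp only [Finset.mem_filter, Finset.mem_univ, true_and, hED]
    exact key _ v rfl
  · rintro rfl
    constructor
    · intro v hv
      simp only [Finset.mem_filter, Finset.mem_univ, true_and, hED, not_and]
      intro hOdd
      rcases Sym2.mem_iff.mp hv with rfl | rfl
      · rw [SimpleGraph.dist_self] at hOdd
        simp at hOdd
      · rw [SimpleGraph.dist_self (v := v)] at hOdd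
        simp at hOdd
    · intro u v huv hne
      rw [card_pair_inter huv.ne]
      simp only [Finset.mem_filter, Finset.mem_univ, true_and, hED]
      have := tree_parity hT he huv hne
      tauto
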